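/- (PCA initialization lemma, a consequence of the Davis–Kahan sin Θ theorem.) Let X = [X_in, X_out] ∈ ℝ^{D×N} be a noiseless inlier-outlier data matrix whose inlier columns X_in all lie in a d-dimensional linear subspace L* of ℝ^D. Suppose that for some 0 < γ < π/2, sin(γ) · λ_d(X_in X_inᵀ) > ‖X_out‖_2², where λ_d denotes the d-th largest eigenvalue and ‖·‖_2 the spectral norm. Then for any d-dimensional subspace V of ℝ^D that is spanned by eigenvectors of X Xᵀ corresponding to its d largest eigenvalues (a PCA d-subspace), the operator norm ‖Q_{L*} P_V‖_2 < sin(γ); equivalently, the largest principal angle between V and L* is less than γ, so the PCA d-subspace lies in the ball B(L*, γ) of subspaces whose largest principal angle with L* is less than γ. -/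

import Mathlib

open scoped RealInnerProductSpace

lemma aux_inner_span_zero {D : ℕ} (w : Fin D → EuclideanSpace ℝ (Fin D))
    (hw : Orthonormal ℝ w) (S : Set (Fin D)) (j : Fin D) (hj : j ∉ S)
    (x : EuclideanSpace ℝ (Fin D)) (hx : x ∈ Submodule.span ℝ (w '' S)) :
    ⟪w j, x⟫ = 0 := by
  induction hx using Submodule.span_induction with
  | mem y hy =>
    obtain ⟨k, hk, rfl⟩ := hy
    exact hw.2 (fun h => hj (h ▸ hk))
  | zero => simp
  | add y z _ _ hy hz => simp [inner_add_right, hy, hz]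
  | smul a y _ hy => simp [inner_smul_right, hy]

lemma aux_sum_repr {D : ℕ} (hD : 0 < D) (w : Fin D → EuclideanSpace ℝ (Fin D))
    (hw : Orthonormal ℝ w) (x : EuclideanSpace ℝ (Fin D)) :
    ∑ j, ⟪w j, x⟫ • w j = x := by
  haveI : Nonempty (Fin D) := ⟨⟨0, hD⟩⟩
  have hcard : Fintype.card (Fin D) = Module.finrank ℝ (EuclideanSpace ℝ (Fin D)) := by
    simp
  have hsp : ⊤ ≤ Submodule.span ℝ (Set.range w) := by
    rw [← coe_basisOfOrthonormalOfCardEqFinrank hw hcard]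
    exact (basisOfOrthonormalOfCardEqFinrank hw hcard).span_eq.ge
  let B := OrthonormalBasis.mk hw hsp
  have h := B.sum_repr' x
  simpa [B, OrthonormalBasis.coe_mk] using h

lemma aux_norm_sq {D : ℕ} (w : Fin D → EuclideanSpace ℝ (Fin D))
    (hw : Orthonormal ℝ w) (c : Fin D → ℝ) :
    ‖∑ j, c j • w j‖ ^ 2 = ∑ j, c j ^ 2 := by
  rw [← real_inner_self_eq_norm_sq, hw.inner_sum]
  simp [pow_two]

lemma aux_card_lt {D : ℕ} (d : ℕ) (hdD : d ≤ D) :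
    Fintype.card {j : Fin D // (j : ℕ) < d} = d := by
  rw [Fintype.card_congr
    (⟨fun j => (⟨j.1.1, j.2⟩ : Fin d),
      fun k => ⟨⟨k.1, lt_of_lt_of_le k.2 hdD⟩, k.2⟩,
      fun j => by ext; rfl, fun k => by ext; rfl⟩ :
      {j : Fin D // (j : ℕ) < d} ≃ Fin d), Fintype.card_fin]

lemma aux_card_ge {D : ℕ} (e : ℕ) (heD : e ≤ D) :
    Fintype.card {j : Fin D // e ≤ (j : ℕ)} = D - e := by
  have h1 : Fintype.card {j : Fin D // e ≤ (j : ℕ)}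
      = Fintype.card {j : Fin D // ¬ ((j : ℕ) < e)} :=
    Fintype.card_congr (Equiv.subtypeEquivRight (by simp [not_lt]))
  rw [h1, Fintype.card_subtype_compl, aux_card_lt e heD, Fintype.card_fin]

noncomputable def covOp {D N : ℕ} (x : Fin N → EuclideanSpace ℝ (Fin D)) :
    EuclideanSpace ℝ (Fin D) →L[ℝ] EuclideanSpace ℝ (Fin D) :=
  ∑ i, (innerSL ℝ (x i)).smulRight (x i)

lemma covOp_apply {D N : ℕ} (x : Fin N → EuclideanSpace ℝ (Fin D))
    (v : EuclideanSpace ℝ (Fin D)) :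
    covOp x v = ∑ i, ⟪x i, v⟫ • x i := by
  simp [covOp, ContinuousLinearMap.sum_apply]

lemma covOp_inner {D N : ℕ} (x : Fin N → EuclideanSpace ℝ (Fin D))
    (v : EuclideanSpace ℝ (Fin D)) :
    ⟪covOp x v, v⟫ = ∑ i, ⟪x i, v⟫ ^ 2 := by
  rw [covOp_apply, sum_inner]
  refine Finset.sum_congr rfl fun i _ => ?_
  rw [real_inner_smul_left, pow_two]

lemma aux_le_of_sq_le_sq {a b : ℝ} (ha : 0 ≤ a) (hb : 0 ≤ b) (h : a ^ 2 ≤ b ^ 2) :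
    a ≤ b := by nlinarith [sq_nonneg (a - b), sq_nonneg (a + b)]

lemma covOp_norm_le {D N : ℕ} (x : Fin N → EuclideanSpace ℝ (Fin D)) (eps : ℝ)
    (heps0 : 0 ≤ eps)
    (hq : ∀ z : EuclideanSpace ℝ (Fin D), (∑ i, ⟪x i, z⟫ ^ 2) ≤ eps * ‖z‖ ^ 2)
    (y : EuclideanSpace ℝ (Fin D)) : ‖covOp x y‖ ≤ eps * ‖y‖ := by
  have hself : ‖covOp x y‖ ^ 2 = ∑ i, ⟪x i, y⟫ * ⟪x i, covOp x y⟫ := by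
    rw [← real_inner_self_eq_norm_sq]
    nth_rewrite 1 [covOp_apply]
    rw [sum_inner]
    exact Finset.sum_congr rfl fun i _ => real_inner_smul_left _ _ _
  have hCS := Finset.sum_mul_sq_le_sq_mul_sq Finset.univ
    (fun i => ⟪x i, y⟫) (fun i => ⟪x i, covOp x y⟫)
  have hq1 := hq y
  have hq2 := hq (covOp x y)
  have h4 : (‖covOp x y‖ ^ 2) ^ 2
      ≤ (eps * ‖y‖ ^ 2) * (eps * ‖covOp x y‖ ^ 2) := by
    calc (‖covOp x y‖ ^ 2) ^ 2
        = (∑ i, ⟪x i, y⟫ * ⟪x i, covOp x y⟫) ^ 2 := by rw [hself]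
      _ ≤ (∑ i, ⟪x i, y⟫ ^ 2) * (∑ i, ⟪x i, covOp x y⟫ ^ 2) := hCS
      _ ≤ (eps * ‖y‖ ^ 2) * (eps * ‖covOp x y‖ ^ 2) :=
          mul_le_mul hq1 hq2 (Finset.sum_nonneg fun i _ => sq_nonneg _) (by positivity)
  rcases eq_or_lt_of_le (norm_nonneg (covOp x y)) with hz0 | hzpos
  · rw [← hz0]; positivity
  · have h5 : ‖covOp x y‖ ^ 2 * ‖covOp x y‖ ^ 2
        ≤ (eps * ‖y‖) ^ 2 * ‖covOp x y‖ ^ 2 := by nlinarith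
    have h6 : ‖covOp x y‖ ^ 2 ≤ (eps * ‖y‖) ^ 2 :=
      le_of_mul_le_mul_right h5 (by positivity)
    exact aux_le_of_sq_le_sq (norm_nonneg _) (mul_nonneg heps0 (norm_nonneg _)) h6

/-- PCA initialization lemma, a consequence of the Davis–Kahan sin Θ
theorem. Let `X = [X_in, X_out]` be a noiseless inlier-outlier data matrix whose inlier
columns `xin i` all lie in a `d`-dimensional subspace `L*` of `ℝ^D`. Let `lam`, `u` be a
decreasing eigendecomposition of `X_in X_inᵀ` (the operator `v ↦ ∑ ⟪xin i, v⟫ • xin i`),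
so that `lam ⟨d−1⟩ = λ_d(X_in X_inᵀ)`, and suppose for some `0 < γ < π/2` that
`‖X_out‖₂² < sin(γ) · λ_d(X_in X_inᵀ)`, where
`‖X_out‖₂² = sup {∑ ⟪xout i, v⟫² : ‖v‖ = 1}` is the squared spectral norm. Then for any
PCA `d`-subspace `V`, i.e. the span of eigenvectors of `X Xᵀ` corresponding to its `d`
largest eigenvalues, every nonzero `v ∈ V` satisfies `‖Q_{L*} v‖ < sin(γ) ‖v‖`:
the largest principal angle between `V` and `L*` is less than `γ`, so the PCA `d`-subspace
lies in the ball `B(L*, γ)`. -/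
theorem pca_initialization_davis_kahan (D d Nin Nout : ℕ)
    (hd : 0 < d) (hdD : d ≤ D) (γ : ℝ) (hγ0 : 0 < γ) (hγ1 : γ < Real.pi / 2)
    (Lstar : Submodule ℝ (EuclideanSpace ℝ (Fin D)))
    (hLdim : Module.finrank ℝ Lstar = d)
    (xin : Fin Nin → EuclideanSpace ℝ (Fin D)) (hxin : ∀ i, xin i ∈ Lstar)
    (xout : Fin Nout → EuclideanSpace ℝ (Fin D))
    -- eigendecomposition of the inlier covariance `X_in X_inᵀ`, in decreasing order
    (lam : Fin D → ℝ) (u : Fin D → EuclideanSpace ℝ (Fin D))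
    (hu : Orthonormal ℝ u)
    (heigin : ∀ j : Fin D, ∑ i, ⟪xin i, u j⟫ • xin i = lam j • u j)
    (hlamdec : Antitone lam)
    -- the spectral gap condition `sin(γ) · λ_d(X_in X_inᵀ) > ‖X_out‖₂²`
    (hgap : sSup {t : ℝ | ∃ v : EuclideanSpace ℝ (Fin D), ‖v‖ = 1 ∧
        t = ∑ i, ⟪xout i, v⟫ ^ 2} <
      Real.sin γ * lam ⟨d - 1, lt_of_lt_of_le (Nat.sub_lt hd one_pos) hdD⟩)
    -- eigendecomposition of the full covariance `X Xᵀ`, in decreasing order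
    (nu : Fin D → ℝ) (w : Fin D → EuclideanSpace ℝ (Fin D))
    (hw : Orthonormal ℝ w)
    (heigfull : ∀ j : Fin D,
      (∑ i, ⟪xin i, w j⟫ • xin i) + ∑ i, ⟪xout i, w j⟫ • xout i = nu j • w j)
    (hnudec : Antitone nu)
    -- `V` is the corresponding PCA `d`-subspace
    (V : Submodule ℝ (EuclideanSpace ℝ (Fin D)))
    (hV : V = Submodule.span ℝ (w '' {j : Fin D | (j : ℕ) < d})) :
    ∀ v ∈ V, v ≠ 0 →
      ‖(Lstarᗮ.orthogonalProjectionOnto v : EuclideanSpace ℝ (Fin D))‖ <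
        Real.sin γ * ‖v‖ := by
  have hD : 0 < D := lt_of_lt_of_le hd hdD
  set s : ℝ := Real.sin γ with hs_def
  have hs : 0 < s := Real.sin_pos_of_pos_of_lt_pi hγ0
    (lt_of_lt_of_le hγ1 (by linarith [Real.pi_pos]))
  set dIdx : Fin D := ⟨d - 1, lt_of_lt_of_le (Nat.sub_lt hd one_pos) hdD⟩ with hdIdx_def
  set lamd : ℝ := lam dIdx with hlamd_def
  set SSet : Set ℝ := {t : ℝ | ∃ v : EuclideanSpace ℝ (Fin D), ‖v‖ = 1 ∧
      t = ∑ i, ⟪xout i, v⟫ ^ 2} with hSSet_def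
  set eps : ℝ := sSup SSet with heps_def
  have hgap' : eps < s * lamd := hgap
  -- boundedness and nonemptiness of the sup set
  have hbdd : BddAbove SSet := by
    refine ⟨∑ i, ‖xout i‖ ^ 2, ?_⟩
    rintro t ⟨v, hv1, rfl⟩
    refine Finset.sum_le_sum fun i _ => ?_
    have h1 := real_inner_mul_inner_self_le (xout i) v
    have h2 : ⟪xout i, xout i⟫ = ‖xout i‖ ^ 2 := real_inner_self_eq_norm_sq _
    have h3 : ⟪v, v⟫ = ‖v‖ ^ 2 := real_inner_self_eq_norm_sq _
    rw [h2, h3, hv1] at h1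
    nlinarith [h1]
  have hmem0 : (∑ i, ⟪xout i, (EuclideanSpace.single ⟨0, hD⟩ (1:ℝ))⟫ ^ 2) ∈ SSet :=
    ⟨EuclideanSpace.single ⟨0, hD⟩ (1:ℝ), by simp [EuclideanSpace.norm_single], rfl⟩
  have heps0 : 0 ≤ eps :=
    le_trans (Finset.sum_nonneg fun i _ => sq_nonneg _) (le_csSup hbdd hmem0)
  -- quadratic form bound for the outlier operator
  have hepsQ : ∀ x : EuclideanSpace ℝ (Fin D),
      (∑ i, ⟪xout i, x⟫ ^ 2) ≤ eps * ‖x‖ ^ 2 := by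
    intro x
    rcases eq_or_ne x 0 with rfl | hx
    · simp
    · have hxn : 0 < ‖x‖ := norm_pos_iff.mpr hx
      have hu1 : ‖((‖x‖⁻¹ : ℝ) • x : EuclideanSpace ℝ (Fin D))‖ = 1 :=
        norm_smul_inv_norm (𝕜 := ℝ) hx
      have hmem : (∑ i, ⟪xout i, ((‖x‖⁻¹ : ℝ) • x : EuclideanSpace ℝ (Fin D))⟫ ^ 2) ∈ SSet :=
        ⟨_, hu1, rfl⟩
      have hle := le_csSup hbdd hmem
      have hexp : (∑ i, ⟪xout i, ((‖x‖⁻¹ : ℝ) • x : EuclideanSpace ℝ (Fin D))⟫ ^ 2)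
          = (‖x‖⁻¹) ^ 2 * ∑ i, ⟪xout i, x⟫ ^ 2 := by
        rw [Finset.mul_sum]
        refine Finset.sum_congr rfl fun i _ => ?_
        rw [real_inner_smul_right]; ring
      rw [hexp] at hle
      calc (∑ i, ⟪xout i, x⟫ ^ 2)
          = ‖x‖ ^ 2 * ((‖x‖⁻¹) ^ 2 * ∑ i, ⟪xout i, x⟫ ^ 2) := by
            field_simp
        _ ≤ ‖x‖ ^ 2 * eps := mul_le_mul_of_nonneg_left hle (sq_nonneg _)
        _ = eps * ‖x‖ ^ 2 := by ring
  -- positivity of lamd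
  have hlamd : 0 < lamd := by
    have h := lt_of_le_of_lt heps0 hgap'
    rcases mul_pos_iff.mp h with ⟨_, h2⟩ | ⟨h1, _⟩
    · exact h2
    · linarith
  -- eigenvalues lam j for j < d are at least lamd
  have hlamge : ∀ j : Fin D, (j : ℕ) < d → lamd ≤ lam j := by
    intro j hj
    exact hlamdec (by rw [hdIdx_def, Fin.le_def]; simp; omega)
  -- u j lies in Lstar for j < d
  have hud : ∀ j : Fin D, (j : ℕ) < d → u j ∈ Lstar := by
    intro j hj
    have hlj : lam j ≠ 0 := ne_of_gt (lt_of_lt_of_le hlamd (hlamge j hj))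
    have h : u j = (lam j)⁻¹ • (∑ i, ⟪xin i, u j⟫ • xin i) := by
      rw [heigin j, smul_smul, inv_mul_cancel₀ hlj, one_smul]
    rw [h]
    exact Submodule.smul_mem _ _ (Submodule.sum_mem _ fun i _ =>
      Submodule.smul_mem _ _ (hxin i))
  -- Lstar is the span of the first d eigenvectors u
  have hspanu : Submodule.span ℝ (u '' {j : Fin D | (j : ℕ) < d}) = Lstar := by
    have hle : Submodule.span ℝ (u '' {j : Fin D | (j : ℕ) < d}) ≤ Lstar := by
      rw [Submodule.span_le]
      rintro y ⟨j, hj, rfl⟩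
      exact hud j hj
    refine Submodule.eq_of_le_of_finrank_eq hle ?_
    rw [hLdim]
    have himg : u '' {j : Fin D | (j : ℕ) < d}
        = Set.range (u ∘ (Subtype.val : {j : Fin D // (j : ℕ) < d} → Fin D)) := by
      rw [Set.range_comp, Subtype.range_val_subtype]
    rw [himg, finrank_span_eq_card (hu.linearIndependent.comp _ Subtype.val_injective)]
    exact aux_card_lt d hdD
  -- coefficients of an element of Lstar in the u basis vanish for j ≥ d
  have hucoeff : ∀ x ∈ Lstar, ∀ j : Fin D, ¬ ((j : ℕ) < d) → ⟪u j, x⟫ = 0 := by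
    intro x hx j hj
    exact aux_inner_span_zero u hu _ j (by simpa using hj) x (hspanu ▸ hx)
  -- lower bound for the inlier quadratic form on Lstar
  have hAin_lower : ∀ x ∈ Lstar, lamd * ‖x‖ ^ 2 ≤ ∑ i, ⟪xin i, x⟫ ^ 2 := by
    intro x hx
    have hxrepr : ∑ j, ⟪u j, x⟫ • u j = x := aux_sum_repr hD u hu x
    have hAx : covOp xin x = ∑ j, (⟪u j, x⟫ * lam j) • u j := by
      conv_lhs => rw [← hxrepr]
      rw [map_sum]
      refine Finset.sum_congr rfl fun j _ => ?_
      rw [map_smul, covOp_apply, heigin j, smul_smul]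
    have hq : (∑ i, ⟪xin i, x⟫ ^ 2) = ∑ j, lam j * ⟪u j, x⟫ ^ 2 := by
      rw [← covOp_inner, hAx, sum_inner]
      refine Finset.sum_congr rfl fun j _ => ?_
      rw [real_inner_smul_left]; ring
    rw [hq]
    have hnx : ‖x‖ ^ 2 = ∑ j, ⟪u j, x⟫ ^ 2 := by
      conv_lhs => rw [← hxrepr]
      exact aux_norm_sq u hu _
    rw [hnx, Finset.mul_sum]
    refine Finset.sum_le_sum fun j _ => ?_
    by_cases hj : (j : ℕ) < d
    · exact mul_le_mul_of_nonneg_right (hlamge j hj) (sq_nonneg _)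
    · rw [hucoeff x hx j hj]; simp
  -- the full operator
  set Aop : EuclideanSpace ℝ (Fin D) →L[ℝ] EuclideanSpace ℝ (Fin D) :=
    covOp xin + covOp xout with hAop_def
  have hAw : ∀ j : Fin D, Aop (w j) = nu j • w j := by
    intro j
    rw [hAop_def, ContinuousLinearMap.add_apply, covOp_apply, covOp_apply]
    exact heigfull j
  -- nu dIdx ≥ lamd via a dimension-counting argument
  have hnud : lamd ≤ nu dIdx := by
    set W : Submodule ℝ (EuclideanSpace ℝ (Fin D)) :=
      Submodule.span ℝ (w '' {j : Fin D | d - 1 ≤ (j : ℕ)}) with hW_def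
    have hWrank : Module.finrank ℝ W = D - (d - 1) := by
      have himg : w '' {j : Fin D | d - 1 ≤ (j : ℕ)}
          = Set.range (w ∘ (Subtype.val : {j : Fin D // d - 1 ≤ (j : ℕ)} → Fin D)) := by
        rw [Set.range_comp, Subtype.range_val_subtype]
      rw [hW_def, himg,
        finrank_span_eq_card (hw.linearIndependent.comp _ Subtype.val_injective)]
      exact aux_card_ge (d - 1) (by omega)
    have hinf : 0 < Module.finrank ℝ
        (Lstar ⊓ W : Submodule ℝ (EuclideanSpace ℝ (Fin D))) := by
      have hsum := Submodule.finrank_sup_add_finrank_inf_eq Lstar W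
      have hle : Module.finrank ℝ
          (Lstar ⊔ W : Submodule ℝ (EuclideanSpace ℝ (Fin D))) ≤ D := by
        have h := Submodule.finrank_le (Lstar ⊔ W)
        simpa [finrank_euclideanSpace] using h
      rw [hLdim, hWrank] at hsum
      omega
    obtain ⟨x, hxmem, hx0⟩ : ∃ x, x ∈ Lstar ⊓ W ∧ x ≠ 0 := by
      haveI : Nontrivial (Lstar ⊓ W : Submodule ℝ (EuclideanSpace ℝ (Fin D))) :=
        Module.finrank_pos_iff.mp hinf
      obtain ⟨⟨x, hx⟩, hxne⟩ :=
        exists_ne (0 : (Lstar ⊓ W : Submodule ℝ (EuclideanSpace ℝ (Fin D))))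
      exact ⟨x, hx, fun h => hxne (Subtype.ext (by simp [h]))⟩
    have hxL : x ∈ Lstar := hxmem.1
    have hxW : x ∈ W := hxmem.2
    have hb0 : ∀ j : Fin D, (j : ℕ) < d - 1 → ⟪w j, x⟫ = 0 := by
      intro j hj
      exact aux_inner_span_zero w hw _ j
        (by simp only [Set.mem_setOf_eq, not_le]; omega) x hxW
    have hxrepr : ∑ j, ⟪w j, x⟫ • w j = x := aux_sum_repr hD w hw x
    have hAx : ⟪Aop x, x⟫ = ∑ j, nu j * ⟪w j, x⟫ ^ 2 := by
      have h1 : Aop x = ∑ j, (⟪w j, x⟫ * nu j) • w j := by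
        conv_lhs => rw [← hxrepr]
        rw [map_sum]
        refine Finset.sum_congr rfl fun j _ => ?_
        rw [map_smul, hAw j, smul_smul]
      rw [h1, sum_inner]
      refine Finset.sum_congr rfl fun j _ => ?_
      rw [real_inner_smul_left]; ring
    have hnx : ‖x‖ ^ 2 = ∑ j, ⟪w j, x⟫ ^ 2 := by
      conv_lhs => rw [← hxrepr]
      exact aux_norm_sq w hw _
    have hup : ⟪Aop x, x⟫ ≤ nu dIdx * ‖x‖ ^ 2 := by
      rw [hAx, hnx, Finset.mul_sum]
      refine Finset.sum_le_sum fun j _ => ?_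
      by_cases hj : (j : ℕ) < d - 1
      · rw [hb0 j hj]; simp
      · refine mul_le_mul_of_nonneg_right ?_ (sq_nonneg _)
        exact hnudec (by rw [hdIdx_def, Fin.le_def]; simp; omega)
    have hlow : lamd * ‖x‖ ^ 2 ≤ ⟪Aop x, x⟫ := by
      have hq : ⟪Aop x, x⟫ = (∑ i, ⟪xin i, x⟫ ^ 2) + ∑ i, ⟪xout i, x⟫ ^ 2 := by
        rw [hAop_def, ContinuousLinearMap.add_apply, inner_add_left,
          covOp_inner, covOp_inner]
      rw [hq]
      have h0 : 0 ≤ ∑ i, ⟪xout i, x⟫ ^ 2 := Finset.sum_nonneg fun i _ => sq_nonneg _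
      linarith [hAin_lower x hxL]
    have hxn : 0 < ‖x‖ ^ 2 := by
      have := norm_pos_iff.mpr hx0
      positivity
    exact le_of_mul_le_mul_right (by linarith) hxn
  -- main argument
  intro v hvV hv0
  have hvpos : 0 < ‖v‖ := norm_pos_iff.mpr hv0
  have hvV' : v ∈ Submodule.span ℝ (w '' {j : Fin D | (j : ℕ) < d}) := hV ▸ hvV
  have hc0 : ∀ j : Fin D, ¬ ((j : ℕ) < d) → ⟪w j, v⟫ = 0 := fun j hj =>
    aux_inner_span_zero w hw _ j (by simpa using hj) v hvV'
  have hnupos : ∀ j : Fin D, (j : ℕ) < d → 0 < nu j := by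
    intro j hj
    have h : nu dIdx ≤ nu j := hnudec (by rw [hdIdx_def, Fin.le_def]; simp; omega)
    linarith
  set y : EuclideanSpace ℝ (Fin D) := ∑ j, (⟪w j, v⟫ / nu j) • w j with hy_def
  have hvrepr : ∑ j, ⟪w j, v⟫ • w j = v := aux_sum_repr hD w hw v
  have hAy : Aop y = v := by
    rw [hy_def, map_sum]
    conv_rhs => rw [← hvrepr]
    refine Finset.sum_congr rfl fun j _ => ?_
    rw [map_smul, hAw j, smul_smul]
    by_cases hj : (j : ℕ) < d
    · rw [div_mul_cancel₀ _ (ne_of_gt (hnupos j hj))]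
    · rw [hc0 j hj]; simp
  have hynorm : lamd * ‖y‖ ≤ ‖v‖ := by
    have h1 : ‖y‖ ^ 2 = ∑ j, (⟪w j, v⟫ / nu j) ^ 2 := by
      rw [hy_def]; exact aux_norm_sq w hw _
    have h2 : ‖v‖ ^ 2 = ∑ j, ⟪w j, v⟫ ^ 2 := by
      conv_lhs => rw [← hvrepr]
      exact aux_norm_sq w hw _
    have hsq : ‖y‖ ^ 2 * lamd ^ 2 ≤ ‖v‖ ^ 2 := by
      rw [h1, h2, Finset.sum_mul]
      refine Finset.sum_le_sum fun j _ => ?_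
      by_cases hj : (j : ℕ) < d
      · have hnuj := hnupos j hj
        have hge : lamd ≤ nu j := le_trans hnud
          (hnudec (by rw [hdIdx_def, Fin.le_def]; simp; omega))
        have hl2 : lamd ^ 2 ≤ nu j ^ 2 := by
          rw [pow_two, pow_two]
          exact mul_le_mul hge hge hlamd.le (le_trans hlamd.le hge)
        calc (⟪w j, v⟫ / nu j) ^ 2 * lamd ^ 2
            ≤ (⟪w j, v⟫ / nu j) ^ 2 * nu j ^ 2 :=
              mul_le_mul_of_nonneg_left hl2 (sq_nonneg _)
          _ = ⟪w j, v⟫ ^ 2 := by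
              rw [div_pow]
              field_simp
      · rw [hc0 j hj]; simp [sq_nonneg]
    refine aux_le_of_sq_le_sq (mul_nonneg hlamd.le (norm_nonneg y)) (norm_nonneg v) ?_
    calc (lamd * ‖y‖) ^ 2 = ‖y‖ ^ 2 * lamd ^ 2 := by ring
      _ ≤ ‖v‖ ^ 2 := hsq
  -- the projection of v is the projection of the outlier part
  have hin : covOp xin y ∈ Lstar := by
    rw [covOp_apply]
    exact Submodule.sum_mem _ fun i _ => Submodule.smul_mem _ _ (hxin i)
  have hPbound : ‖(Lstarᗮ.orthogonalProjectionOnto v : EuclideanSpace ℝ (Fin D))‖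
      ≤ ‖covOp xout y‖ := by
    have h0 : Lstarᗮ.orthogonalProjectionOnto v
        = Lstarᗮ.orthogonalProjectionOnto (covOp xout y) := by
      conv_lhs => rw [← hAy]
      have hsplit : Aop y = covOp xin y + covOp xout y := by
        rw [hAop_def, ContinuousLinearMap.add_apply]
      rw [hsplit, map_add,
        Submodule.orthogonalProjectionOnto_apply_of_mem_orthogonal (K := Lstarᗮ) (Submodule.le_orthogonal_orthogonal Lstar hin), zero_add]
    rw [h0]
    calc ‖(Lstarᗮ.orthogonalProjectionOnto (covOp xout y) : EuclideanSpace ℝ (Fin D))‖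
        = ‖Lstarᗮ.orthogonalProjectionOnto (covOp xout y)‖ := rfl
      _ ≤ ‖Lstarᗮ.orthogonalProjectionOnto‖ * ‖covOp xout y‖ :=
          ContinuousLinearMap.le_opNorm _ _
      _ ≤ 1 * ‖covOp xout y‖ :=
          mul_le_mul_of_nonneg_right (Submodule.orthogonalProjectionOnto_norm_le _) (norm_nonneg _)
      _ = ‖covOp xout y‖ := one_mul _
  -- norm bound on the outlier part
  have hzle : ‖covOp xout y‖ ≤ eps * ‖y‖ := covOp_norm_le xout eps heps0 hepsQ y
  -- conclusion
  refine lt_of_le_of_lt (le_trans hPbound hzle) ?_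
  rcases eq_or_lt_of_le (norm_nonneg y) with hy0 | hypos
  · rw [← hy0, mul_zero]
    exact mul_pos hs hvpos
  · calc eps * ‖y‖ < (s * lamd) * ‖y‖ := mul_lt_mul_of_pos_right hgap' hypos
      _ = s * (lamd * ‖y‖) := by ring
      _ ≤ s * ‖v‖ := mul_le_mul_of_nonneg_left hynorm hs.le
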